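/- Let U be an open subset of ℂⁿ and let ℓ₁, …, ℓ_m : U → ℝ be C² (smooth) functions that are everywhere strictly positive, and set S = ℓ₁ + ⋯ + ℓ_m. Then for every point p ∈ U and every vector v ∈ ℂⁿ, the Levi quantity of log S satisfies Λ(log S)(p, v) ≥ (1 / S(p)) · Σ_{j=1}^{m} ℓ_j(p) · Λ(log ℓ_j)(p, v). (This is the estimate of closed hermitian (1,1)-forms √−1 ∂∂̄ log(Σ_j ℓ_j) ≥ (1/Σ_k ℓ_k) Σ_j ℓ_j √−1 ∂∂̄ log ℓ_j.) -/

import Mathlib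

/-- The Levi quantity of a real-valued function `f` on `ℂⁿ` at a point `p` in direction `v`:
`Λ(f)(p, v) = D²f(p)(v, v) + D²f(p)(iv, iv)`, where `D²f(p)` is the second real Fréchet
derivative of `f` at `p`. -/
noncomputable def leviQuantity {n : ℕ} (f : EuclideanSpace ℂ (Fin n) → ℝ)
    (p v : EuclideanSpace ℂ (Fin n)) : ℝ :=
  fderiv ℝ (fderiv ℝ f) p v v +
    fderiv ℝ (fderiv ℝ f) p (Complex.I • v) (Complex.I • v)

lemma d2_log_apply {n : ℕ} {U : Set (EuclideanSpace ℂ (Fin n))} (hU : IsOpen U)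
    {f : EuclideanSpace ℂ (Fin n) → ℝ} (hf : ContDiffOn ℝ 2 f U)
    (hpos : ∀ x ∈ U, 0 < f x) {p : EuclideanSpace ℂ (Fin n)} (hp : p ∈ U)
    (w : EuclideanSpace ℂ (Fin n)) :
    fderiv ℝ (fderiv ℝ (fun x => Real.log (f x))) p w w
      = (f p)⁻¹ * fderiv ℝ (fderiv ℝ f) p w w - ((f p)⁻¹) ^ 2 * (fderiv ℝ f p w) ^ 2 := by
  have hdiff : ∀ x ∈ U, DifferentiableAt ℝ f x := fun x hx =>
    (hf.contDiffAt (hU.mem_nhds hx)).differentiableAt two_ne_zero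
  have h1 : fderiv ℝ (fun x => Real.log (f x)) =ᶠ[nhds p] fun x => (f x)⁻¹ • fderiv ℝ f x := by
    filter_upwards [hU.mem_nhds hp] with x hx
    exact ((hdiff x hx).hasFDerivAt.log (hpos x hx).ne').fderiv
  have hF : DifferentiableAt ℝ (fderiv ℝ f) p :=
    ((hf.contDiffAt (hU.mem_nhds hp)).fderiv_right (le_refl 2)).differentiableAt one_ne_zero
  have hinv : HasFDerivAt (fun x => (f x)⁻¹) ((-(f p ^ 2)⁻¹) • fderiv ℝ f p) p :=
    (hasDerivAt_inv (hpos p hp).ne').comp_hasFDerivAt p (hdiff p hp).hasFDerivAt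
  have h2 : fderiv ℝ (fun x => (f x)⁻¹ • fderiv ℝ f x) p
      = (f p)⁻¹ • fderiv ℝ (fderiv ℝ f) p
        + (((-(f p ^ 2)⁻¹) • fderiv ℝ f p).smulRight (fderiv ℝ f p)) := by
    rw [fderiv_fun_smul hinv.differentiableAt hF, hinv.fderiv]
  rw [h1.fderiv_eq, h2]
  simp only [ContinuousLinearMap.add_apply, ContinuousLinearMap.smul_apply,
    ContinuousLinearMap.smulRight_apply, ContinuousLinearMap.coe_smul', Pi.smul_apply,
    smul_eq_mul]
  have hne : f p ≠ 0 := (hpos p hp).ne'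
  field_simp
  ring

lemma levi_log {n : ℕ} {U : Set (EuclideanSpace ℂ (Fin n))} (hU : IsOpen U)
    {f : EuclideanSpace ℂ (Fin n) → ℝ} (hf : ContDiffOn ℝ 2 f U)
    (hpos : ∀ x ∈ U, 0 < f x) {p : EuclideanSpace ℂ (Fin n)} (hp : p ∈ U)
    (v : EuclideanSpace ℂ (Fin n)) :
    leviQuantity (fun x => Real.log (f x)) p v
      = (f p)⁻¹ * leviQuantity f p v
        - ((f p)⁻¹) ^ 2 * ((fderiv ℝ f p v) ^ 2 + (fderiv ℝ f p (Complex.I • v)) ^ 2) := by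
  unfold leviQuantity
  rw [d2_log_apply hU hf hpos hp v, d2_log_apply hU hf hpos hp (Complex.I • v)]
  ring

lemma d1_sum_apply {n m : ℕ} {U : Set (EuclideanSpace ℂ (Fin n))} (hU : IsOpen U)
    {ℓ : Fin m → EuclideanSpace ℂ (Fin n) → ℝ} (hC2 : ∀ j, ContDiffOn ℝ 2 (ℓ j) U)
    {p : EuclideanSpace ℂ (Fin n)} (hp : p ∈ U) :
    fderiv ℝ (fun x => ∑ j, ℓ j x) p = ∑ j, fderiv ℝ (ℓ j) p := by
  have : ∀ j ∈ Finset.univ, HasFDerivAt (ℓ j) (fderiv ℝ (ℓ j) p) p := fun j _ =>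
    (((hC2 j).contDiffAt (hU.mem_nhds hp)).differentiableAt two_ne_zero).hasFDerivAt
  exact (HasFDerivAt.fun_sum this).fderiv

lemma d2_sum_apply {n m : ℕ} {U : Set (EuclideanSpace ℂ (Fin n))} (hU : IsOpen U)
    {ℓ : Fin m → EuclideanSpace ℂ (Fin n) → ℝ} (hC2 : ∀ j, ContDiffOn ℝ 2 (ℓ j) U)
    {p : EuclideanSpace ℂ (Fin n)} (hp : p ∈ U) :
    fderiv ℝ (fderiv ℝ (fun x => ∑ j, ℓ j x)) p = ∑ j, fderiv ℝ (fderiv ℝ (ℓ j)) p := by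
  have h1 : fderiv ℝ (fun x => ∑ j, ℓ j x) =ᶠ[nhds p] fun x => ∑ j, fderiv ℝ (ℓ j) x := by
    filter_upwards [hU.mem_nhds hp] with x hx
    exact d1_sum_apply hU hC2 hx
  rw [h1.fderiv_eq]
  have : ∀ j ∈ Finset.univ,
      HasFDerivAt (fun x => fderiv ℝ (ℓ j) x) (fderiv ℝ (fderiv ℝ (ℓ j)) p) p := fun j _ =>
    ((((hC2 j).contDiffAt (hU.mem_nhds hp)).fderiv_right
      (le_refl 2)).differentiableAt one_ne_zero).hasFDerivAt
  exact (HasFDerivAt.fun_sum this).fderiv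

lemma levi_sum {n m : ℕ} {U : Set (EuclideanSpace ℂ (Fin n))} (hU : IsOpen U)
    {ℓ : Fin m → EuclideanSpace ℂ (Fin n) → ℝ} (hC2 : ∀ j, ContDiffOn ℝ 2 (ℓ j) U)
    {p : EuclideanSpace ℂ (Fin n)} (hp : p ∈ U) (v : EuclideanSpace ℂ (Fin n)) :
    leviQuantity (fun x => ∑ j, ℓ j x) p v = ∑ j, leviQuantity (ℓ j) p v := by
  unfold leviQuantity
  rw [d2_sum_apply hU hC2 hp]
  simp [ContinuousLinearMap.sum_apply, Finset.sum_add_distrib]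

/-- For positive C² functions `ℓ₁, …, ℓ_m` on an open set `U ⊆ ℂⁿ` with sum `S`,
the Levi quantity of `log S` is bounded below by
`(1 / S(p)) · Σ_j ℓ_j(p) · Λ(log ℓ_j)(p, v)`. -/
theorem levi_log_sum_ge {n m : ℕ} (U : Set (EuclideanSpace ℂ (Fin n))) (hU : IsOpen U)
    (ℓ : Fin m → EuclideanSpace ℂ (Fin n) → ℝ)
    (hC2 : ∀ j, ContDiffOn ℝ 2 (ℓ j) U)
    (hpos : ∀ j, ∀ p ∈ U, 0 < ℓ j p)
    (S : EuclideanSpace ℂ (Fin n) → ℝ)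
    (hS : S = fun p => ∑ j, ℓ j p) :
    ∀ p ∈ U, ∀ v : EuclideanSpace ℂ (Fin n),
      leviQuantity (fun x => Real.log (S x)) p v ≥
        (1 / S p) * ∑ j, ℓ j p * leviQuantity (fun x => Real.log (ℓ j x)) p v := by
  intro p hp v
  subst hS
  rcases Nat.eq_zero_or_pos m with hm | hm
  · subst hm
    have h0 : (0 : EuclideanSpace ℂ (Fin n) → EuclideanSpace ℂ (Fin n) →L[ℝ] ℝ)
        = fun _ => (0 : EuclideanSpace ℂ (Fin n) →L[ℝ] ℝ) := rfl
    simp [leviQuantity, h0, fderiv_const]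
  · have : Nonempty (Fin m) := ⟨⟨0, hm⟩⟩
    have hSC2 : ContDiffOn ℝ 2 (fun x => ∑ j, ℓ j x) U :=
      ContDiffOn.sum fun j _ => hC2 j
    have hSpos : ∀ x ∈ U, 0 < ∑ j, ℓ j x := fun x hx =>
      Finset.sum_pos (fun j _ => hpos j x hx) Finset.univ_nonempty
    set Sp := ∑ j, ℓ j p with hSp
    have hSp0 : 0 < Sp := hSpos p hp
    set a : Fin m → ℝ := fun j => fderiv ℝ (ℓ j) p v with ha
    set b : Fin m → ℝ := fun j => fderiv ℝ (ℓ j) p (Complex.I • v) with hb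
    set Q : Fin m → ℝ := fun j => leviQuantity (ℓ j) p v with hQ
    have hlogj : ∀ j, leviQuantity (fun x => Real.log (ℓ j x)) p v
        = (ℓ j p)⁻¹ * Q j - ((ℓ j p)⁻¹) ^ 2 * ((a j) ^ 2 + (b j) ^ 2) := fun j =>
      levi_log hU (hC2 j) (hpos j) hp v
    have hlogS : leviQuantity (fun x => Real.log (∑ j, ℓ j x)) p v
        = Sp⁻¹ * (∑ j, Q j)
          - (Sp⁻¹) ^ 2 * ((∑ j, a j) ^ 2 + (∑ j, b j) ^ 2) := by
      rw [levi_log hU hSC2 hSpos hp v, levi_sum hU hC2 hp v,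
        d1_sum_apply hU hC2 hp]
      simp [ContinuousLinearMap.sum_apply, ha, hb]
      rfl
    rw [hlogS]
    have hrw : ∀ j, ℓ j p * leviQuantity (fun x => Real.log (ℓ j x)) p v
        = Q j - ((a j) ^ 2 + (b j) ^ 2) / ℓ j p := by
      intro j
      rw [hlogj j]
      have h0 : ℓ j p ≠ 0 := (hpos j p hp).ne'
      field_simp
    simp only [hrw]
    rw [Finset.sum_sub_distrib]
    -- Cauchy-Schwarz (Sedrakyan)
    have hca : (∑ j, a j) ^ 2 / Sp ≤ ∑ j, (a j) ^ 2 / ℓ j p :=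
      Finset.sq_sum_div_le_sum_sq_div Finset.univ a (fun j _ => hpos j p hp)
    have hcb : (∑ j, b j) ^ 2 / Sp ≤ ∑ j, (b j) ^ 2 / ℓ j p :=
      Finset.sq_sum_div_le_sum_sq_div Finset.univ b (fun j _ => hpos j p hp)
    have hsum : ((∑ j, a j) ^ 2 + (∑ j, b j) ^ 2) / Sp
        ≤ ∑ j, ((a j) ^ 2 + (b j) ^ 2) / ℓ j p := by
      rw [add_div, Finset.sum_congr rfl (fun j _ => add_div ((a j) ^ 2) ((b j) ^ 2) (ℓ j p)),
        Finset.sum_add_distrib]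
      exact add_le_add hca hcb
    have key : (Sp⁻¹) ^ 2 * ((∑ j, a j) ^ 2 + (∑ j, b j) ^ 2)
        ≤ (1 / Sp) * ∑ j, ((a j) ^ 2 + (b j) ^ 2) / ℓ j p := by
      have := mul_le_mul_of_nonneg_left hsum (le_of_lt (inv_pos.mpr hSp0))
      calc (Sp⁻¹) ^ 2 * ((∑ j, a j) ^ 2 + (∑ j, b j) ^ 2)
          = Sp⁻¹ * (((∑ j, a j) ^ 2 + (∑ j, b j) ^ 2) / Sp) := by
            rw [div_eq_mul_inv]; ring
        _ ≤ Sp⁻¹ * ∑ j, ((a j) ^ 2 + (b j) ^ 2) / ℓ j p := this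
        _ = (1 / Sp) * ∑ j, ((a j) ^ 2 + (b j) ^ 2) / ℓ j p := by rw [one_div]
    have expand : (1 / Sp) * ((∑ j, Q j) - ∑ j, ((a j) ^ 2 + (b j) ^ 2) / ℓ j p)
        = Sp⁻¹ * (∑ j, Q j) - (1 / Sp) * ∑ j, ((a j) ^ 2 + (b j) ^ 2) / ℓ j p := by
      rw [one_div]; ring
    rw [expand]
    linarith [key]
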